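/- (Theorem 2: monotonic improvement of federated policy iteration) Fix γ ∈ (0,1) and a reference policy π. For each agent n let ε_n = max_{s,a} |A_n(s,a)| and c_n = 4ε_nγ/(1−γ)², and suppose the local return η_n : (policies) → ℝ satisfies, for every policy π′, η_n(π′) ≥ η_n(π) + 𝔸_n(π′) − c_n · Σ_{s∈S} ρ_n(s) · D_TV(π(·|s) ‖ π′(·|s)). For each agent k define the penalized local objective h_k(σ) = 𝔸_k(σ) − (α_k + β) · Σ_{s∈S} ρ_k(s) · D_TV(π(·|s) ‖ σ(·|s)) − δ_k · max_{s∈S} D_TV(π(·|s) ‖ σ(·|s)), where α_k = 2‖B_k‖_F (the heterogeneity matrix B_k being taken with reference agent k), β = Σ_{n=1}^N q_n c_n, and δ_k = 2 Σ_{n=1}^N q_n c_n · (1/2) Σ_{s∈S} |ρ_n(s) − ρ_k(s)|. Note that h_k(π) = 0. If each local policy π_k satisfies h_k(π_k) ≥ 0 (in particular if π_k maximizes h_k over all policies), then the aggregated policy π̄(a|s) = Σ_{k=1}^N q_k π_k(a|s) satisfies Σ_{n=1}^N q_n η_n(π̄) ≥ Σ_{n=1}^N q_n η_n(π), i.e.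 the global return does not decrease. -/

import Mathlib

open Finset

/-- A (stochastic) policy: for each state `s`, `π s` is a probability
distribution over actions. -/
def IsPolicy {S A : Type*} [Fintype A] (π : S → A → ℝ) : Prop :=
  ∀ s, (∀ a, 0 ≤ π s a) ∧ ∑ a, π s a = 1

/-- Policy advantage `𝔸(σ) = Σ_s ρ(s) Σ_a σ(a|s) A(s,a)`. -/
noncomputable def policyAdv {S A : Type*} [Fintype S] [Fintype A]
    (ρ : S → ℝ) (Adv : S → A → ℝ) (σ : S → A → ℝ) : ℝ :=
  ∑ s, ρ s * ∑ a, σ s a * Adv s a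

/-- Frobenius norm of a matrix indexed by `S × A`. -/
noncomputable def frobNorm {S A : Type*} [Fintype S] [Fintype A]
    (M : S → A → ℝ) : ℝ :=
  Real.sqrt (∑ s, ∑ a, (M s a) ^ 2)

/-- Total-variation distance between two distributions on a finite set. -/
noncomputable def dTV {A : Type*} [Fintype A] (p q : A → ℝ) : ℝ :=
  (1 / 2) * ∑ a, |p a - q a|

/-- Heterogeneity matrix of agent `n`:
`B_n(s,a) = Σ_k q_k (ρ_k(s)/ρ_n(s)) A_k(s,a) − A_n(s,a)`. -/
noncomputable def hetMat {S A : Type*} [Fintype S] [Fintype A] (N : ℕ)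
    (q : Fin N → ℝ) (ρ : Fin N → S → ℝ) (Adv : Fin N → S → A → ℝ)
    (n : Fin N) : S → A → ℝ :=
  fun s a => (∑ k, q k * (ρ k s / ρ n s) * Adv k s a) - Adv n s a

/-- `D_TV^max(π,π') = max_s D_TV(π(·|s) ‖ π'(·|s))`. -/
noncomputable def dTVmax {S A : Type*} [Fintype S] [Fintype A] [Nonempty S]
    (π π' : S → A → ℝ) : ℝ :=
  Finset.univ.sup' Finset.univ_nonempty (fun s => dTV (π s) (π' s))

/-- `ε = max_{s,a} |A(s,a)|`. -/
noncomputable def maxAbs {S A : Type*} [Fintype S] [Fintype A] [Nonempty S]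
    [Nonempty A] (M : S → A → ℝ) : ℝ :=
  Finset.univ.sup' Finset.univ_nonempty (fun p : S × A => |M p.1 p.2|)

/-- `c = 4εγ/(1−γ)²`. -/
noncomputable def cCoef {S A : Type*} [Fintype S] [Fintype A] [Nonempty S]
    [Nonempty A] (γ : ℝ) (M : S → A → ℝ) : ℝ :=
  4 * maxAbs M * γ / (1 - γ) ^ 2

/-- The penalized local objective `h_k` of agent `k`:
`h_k(σ) = 𝔸_k(σ) − (α_k + β) Σ_s ρ_k(s) D_TV(π(·|s)‖σ(·|s))
  − δ_k D_TV^max(π,σ)`, where `α_k = 2‖B_k‖_F`, `β = Σ_n q_n c_n` and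
`δ_k = 2 Σ_n q_n c_n (1/2) Σ_s |ρ_n(s) − ρ_k(s)|`. -/
noncomputable def hObj {S A : Type*} [Fintype S] [Fintype A] [Nonempty S]
    [Nonempty A] (N : ℕ) (q : Fin N → ℝ) (γ : ℝ) (π : S → A → ℝ)
    (ρ : Fin N → S → ℝ) (Adv : Fin N → S → A → ℝ) (k : Fin N)
    (σ : S → A → ℝ) : ℝ :=
  policyAdv (ρ k) (Adv k) σ
    - (2 * frobNorm (hetMat N q ρ Adv k) + ∑ n, q n * cCoef γ (Adv n))
      * ∑ s, ρ k s * dTV (π s) (σ s)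
    - (2 * ∑ n, q n * cCoef γ (Adv n) * ((1 / 2) * ∑ s, |ρ n s - ρ k s|))
      * dTVmax π σ


section Helpers

variable {S A : Type*} [Fintype S] [Fintype A]

lemma dTV_nonneg' (p q : A → ℝ) : 0 ≤ dTV p q := by
  unfold dTV
  have h : 0 ≤ ∑ a, |p a - q a| := Finset.sum_nonneg fun a _ => abs_nonneg _
  linarith

lemma abs_le_frobNorm' (M : S → A → ℝ) (s : S) (a : A) : |M s a| ≤ frobNorm M := by
  rw [← Real.sqrt_sq_eq_abs]
  apply Real.sqrt_le_sqrt
  calc (M s a) ^ 2 ≤ ∑ b, (M s b) ^ 2 :=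
        Finset.single_le_sum (f := fun b => (M s b) ^ 2)
          (fun b _ => sq_nonneg _) (Finset.mem_univ a)
    _ ≤ ∑ t, ∑ b, (M t b) ^ 2 :=
        Finset.single_le_sum (f := fun t => ∑ b, (M t b) ^ 2)
          (fun t _ => Finset.sum_nonneg fun b _ => sq_nonneg _) (Finset.mem_univ s)

lemma weighted_sum_lb' (p p' B : A → ℝ) (C : ℝ)
    (hC : ∀ a, |B a| ≤ C) (h0 : ∑ a, p a * B a = 0) :
    -(2 * C * dTV p p') ≤ ∑ a, p' a * B a := by
  have h1 : ∑ a, (p' a - p a) * B a = ∑ a, p' a * B a := by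
    simp only [sub_mul]
    rw [Finset.sum_sub_distrib, h0, sub_zero]
  rw [← h1]
  have h2 : ∀ a, -(|p a - p' a| * C) ≤ (p' a - p a) * B a := by
    intro a
    have h3 : |(p' a - p a) * B a| ≤ |p a - p' a| * C := by
      rw [abs_mul, abs_sub_comm]
      exact mul_le_mul_of_nonneg_left (hC a) (abs_nonneg _)
    have := neg_abs_le ((p' a - p a) * B a)
    linarith
  have h4 : ∑ a, -(|p a - p' a| * C) = -(2 * C * dTV p p') := by
    unfold dTV
    rw [Finset.sum_neg_distrib, ← Finset.sum_mul]
    ring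
  calc -(2 * C * dTV p p') = ∑ a, -(|p a - p' a| * C) := h4.symm
    _ ≤ ∑ a, (p' a - p a) * B a := Finset.sum_le_sum fun a _ => h2 a

lemma dTV_convex' {N : ℕ} (q : Fin N → ℝ)
    (hq : ∀ k, 0 ≤ q k) (hqsum : ∑ k, q k = 1) (p : A → ℝ) (f : Fin N → A → ℝ) :
    dTV p (fun a => ∑ k, q k * f k a) ≤ ∑ k, q k * dTV p (f k) := by
  unfold dTV
  have h : ∀ a, |p a - ∑ k, q k * f k a| ≤ ∑ k, q k * |p a - f k a| := by
    intro a
    have he : p a - ∑ k, q k * f k a = ∑ k, q k * (p a - f k a) := by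
      simp only [mul_sub]
      rw [Finset.sum_sub_distrib, ← Finset.sum_mul, hqsum, one_mul]
    rw [he]
    calc |∑ k, q k * (p a - f k a)| ≤ ∑ k, |q k * (p a - f k a)| :=
          Finset.abs_sum_le_sum_abs _ _
      _ = ∑ k, q k * |p a - f k a| := Finset.sum_congr rfl fun k _ => by
          rw [abs_mul, abs_of_nonneg (hq k)]
  calc (1/2 : ℝ) * ∑ a, |p a - ∑ k, q k * f k a|
      ≤ (1/2 : ℝ) * ∑ a, ∑ k, q k * |p a - f k a| := by
        have := Finset.sum_le_sum (fun a (_ : a ∈ Finset.univ) => h a)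
        linarith
    _ = ∑ k, q k * ((1/2) * ∑ a, |p a - f k a|) := by
        rw [Finset.sum_comm, Finset.mul_sum]
        exact Finset.sum_congr rfl fun k _ => by
          rw [← Finset.mul_sum]; ring

variable [Nonempty S] [Nonempty A]

lemma maxAbs_nonneg' (M : S → A → ℝ) : 0 ≤ maxAbs M := by
  obtain ⟨p⟩ : Nonempty (S × A) := inferInstance
  unfold maxAbs
  exact le_trans (abs_nonneg (M p.1 p.2))
    (Finset.le_sup' (fun p : S × A => |M p.1 p.2|) (Finset.mem_univ p))

lemma cCoef_nonneg' {γ : ℝ} (hγ0 : 0 < γ) (hγ1 : γ < 1) (M : S → A → ℝ) :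
    0 ≤ cCoef γ M := by
  unfold cCoef
  have h1 := maxAbs_nonneg' M
  have h2 : (0:ℝ) < (1 - γ) ^ 2 := by
    have : (0:ℝ) < 1 - γ := by linarith
    positivity
  have h3 : 0 ≤ 4 * maxAbs M * γ := by positivity
  exact div_nonneg h3 h2.le

lemma dTV_le_dTVmax' (π π' : S → A → ℝ) (s : S) :
    dTV (π s) (π' s) ≤ dTVmax π π' := by
  unfold dTVmax
  exact Finset.le_sup' (fun s => dTV (π s) (π' s)) (Finset.mem_univ s)

lemma dTVmax_nonneg' (π π' : S → A → ℝ) : 0 ≤ dTVmax π π' := by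
  obtain ⟨s⟩ : Nonempty S := inferInstance
  exact le_trans (dTV_nonneg' (π s) (π' s)) (dTV_le_dTVmax' π π' s)

lemma advantage_decomp' (N : ℕ)
    (q : Fin N → ℝ) (ρ : Fin N → S → ℝ) (hρ : ∀ k s, 0 < ρ k s)
    (Adv : Fin N → S → A → ℝ) (πs : Fin N → S → A → ℝ) :
    ∑ n, q n * policyAdv (ρ n) (Adv n) (fun s a => ∑ k, q k * πs k s a)
      = ∑ k, q k * (policyAdv (ρ k) (Adv k) (πs k)
          + ∑ s, ρ k s * ∑ a, πs k s a * hetMat N q ρ Adv k s a) := by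
  have hB : ∀ (k : Fin N) (s : S) (a : A), ρ k s * hetMat N q ρ Adv k s a
      = (∑ n, q n * (ρ n s * Adv n s a)) - ρ k s * Adv k s a := by
    intro k s a
    unfold hetMat
    rw [mul_sub, Finset.mul_sum]
    congr 1
    refine Finset.sum_congr rfl fun n _ => ?_
    have h : ρ k s ≠ 0 := (hρ k s).ne'
    field_simp
  have hRk : ∀ k : Fin N, policyAdv (ρ k) (Adv k) (πs k)
      + ∑ s, ρ k s * ∑ a, πs k s a * hetMat N q ρ Adv k s a
      = ∑ s, ∑ a, πs k s a * ∑ n, q n * (ρ n s * Adv n s a) := by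
    intro k
    unfold policyAdv
    rw [← Finset.sum_add_distrib]
    refine Finset.sum_congr rfl fun s _ => ?_
    rw [← mul_add, ← Finset.sum_add_distrib, Finset.mul_sum]
    refine Finset.sum_congr rfl fun a _ => ?_
    have h := hB k s a
    linear_combination (πs k s a) * h
  calc ∑ n, q n * policyAdv (ρ n) (Adv n) (fun s a => ∑ k, q k * πs k s a)
      = ∑ n, ∑ s, ∑ a, (∑ k, q k * πs k s a) * (q n * (ρ n s * Adv n s a)) := by
        unfold policyAdv
        simp only [Finset.mul_sum]
        exact Finset.sum_congr rfl fun n _ => Finset.sum_congr rfl fun s _ =>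
          Finset.sum_congr rfl fun a _ => by ring
    _ = ∑ s, ∑ a, (∑ k, q k * πs k s a) * ∑ n, q n * (ρ n s * Adv n s a) := by
        rw [Finset.sum_comm]
        refine Finset.sum_congr rfl fun s _ => ?_
        rw [Finset.sum_comm]
        refine Finset.sum_congr rfl fun a _ => ?_
        rw [Finset.mul_sum]
    _ = ∑ s, ∑ a, ∑ k, q k * (πs k s a * ∑ n, q n * (ρ n s * Adv n s a)) := by
        refine Finset.sum_congr rfl fun s _ => Finset.sum_congr rfl fun a _ => ?_
        rw [Finset.sum_mul]
        exact Finset.sum_congr rfl fun k _ => by ring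
    _ = ∑ s, ∑ k, ∑ a, q k * (πs k s a * ∑ n, q n * (ρ n s * Adv n s a)) :=
        Finset.sum_congr rfl fun s _ => Finset.sum_comm
    _ = ∑ k, ∑ s, ∑ a, q k * (πs k s a * ∑ n, q n * (ρ n s * Adv n s a)) :=
        Finset.sum_comm
    _ = ∑ k, q k * ∑ s, ∑ a, πs k s a * ∑ n, q n * (ρ n s * Adv n s a) := by
        refine Finset.sum_congr rfl fun k _ => ?_
        simp only [Finset.mul_sum]
    _ = ∑ k, q k * (policyAdv (ρ k) (Adv k) (πs k)
          + ∑ s, ρ k s * ∑ a, πs k s a * hetMat N q ρ Adv k s a) := by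
        exact Finset.sum_congr rfl fun k _ => by rw [hRk k]

end Helpers

/-- Theorem 2, monotonic improvement of federated policy
iteration: if each local policy `π_k` satisfies `h_k(π_k) ≥ 0`, then the
aggregated policy `π̄ = Σ_k q_k π_k` does not decrease the global return:
`Σ_n q_n η_n(π̄) ≥ Σ_n q_n η_n(π)`. -/
theorem monotonic_improvement {S A : Type*} [Fintype S] [Fintype A]
    [Nonempty S] [Nonempty A]
    (N : ℕ) (q : Fin N → ℝ) (hq : ∀ k, 0 ≤ q k) (hqsum : ∑ k, q k = 1)
    (γ : ℝ) (hγ0 : 0 < γ) (hγ1 : γ < 1)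
    (π : S → A → ℝ) (hπ : IsPolicy π)
    (ρ : Fin N → S → ℝ) (hρ : ∀ k s, 0 < ρ k s)
    (Adv : Fin N → S → A → ℝ)
    (hAdv : ∀ k s, ∑ a, π s a * Adv k s a = 0)
    (η : Fin N → (S → A → ℝ) → ℝ)
    (hη : ∀ n, ∀ π' : S → A → ℝ, IsPolicy π' →
      η n π' ≥ η n π + policyAdv (ρ n) (Adv n) π'
        - cCoef γ (Adv n) * ∑ s, ρ n s * dTV (π s) (π' s))
    (πs : Fin N → S → A → ℝ) (hπs : ∀ k, IsPolicy (πs k))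
    (hpos : ∀ k, 0 ≤ hObj N q γ π ρ Adv k (πs k)) :
    ∑ n, q n * η n (fun s a => ∑ k, q k * πs k s a)
      ≥ ∑ n, q n * η n π := by
  classical
  set πb : S → A → ℝ := fun s a => ∑ k, q k * πs k s a with hπb
  -- πb is a policy
  have hbar : IsPolicy πb := by
    intro s
    constructor
    · intro a
      exact Finset.sum_nonneg fun k _ => mul_nonneg (hq k) ((hπs k s).1 a)
    · calc ∑ a, πb s a = ∑ a, ∑ k, q k * πs k s a := rfl
        _ = ∑ k, ∑ a, q k * πs k s a := Finset.sum_comm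
        _ = ∑ k, q k * ∑ a, πs k s a := by
            refine Finset.sum_congr rfl fun k _ => ?_
            rw [Finset.mul_sum]
        _ = ∑ k, q k := Finset.sum_congr rfl fun k _ => by rw [(hπs k s).2, mul_one]
        _ = 1 := hqsum
  -- step 1: lower bound each η n πb
  have h1 : ∑ n, q n * (η n π + policyAdv (ρ n) (Adv n) πb
      - cCoef γ (Adv n) * ∑ s, ρ n s * dTV (π s) (πb s)) ≤ ∑ n, q n * η n πb :=
    Finset.sum_le_sum fun n _ =>
      mul_le_mul_of_nonneg_left (hη n πb hbar) (hq n)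
  have hsplit : ∑ n, q n * (η n π + policyAdv (ρ n) (Adv n) πb
      - cCoef γ (Adv n) * ∑ s, ρ n s * dTV (π s) (πb s))
      = ∑ n, q n * η n π
        + ∑ n, (q n * policyAdv (ρ n) (Adv n) πb
            - q n * (cCoef γ (Adv n) * ∑ s, ρ n s * dTV (π s) (πb s))) := by
    rw [← Finset.sum_add_distrib]
    exact Finset.sum_congr rfl fun n _ => by ring
  -- The advantage decomposition
  have hA : ∑ n, q n * policyAdv (ρ n) (Adv n) πb
      = ∑ k, q k * (policyAdv (ρ k) (Adv k) (πs k)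
          + ∑ s, ρ k s * ∑ a, πs k s a * hetMat N q ρ Adv k s a) :=
    advantage_decomp' N q ρ hρ Adv πs
  -- hetMat has zero mean under π
  have h0 : ∀ (k : Fin N) (s : S), ∑ a, π s a * hetMat N q ρ Adv k s a = 0 := by
    intro k s
    unfold hetMat
    have e1 : ∑ a, π s a * ((∑ j, q j * (ρ j s / ρ k s) * Adv j s a) - Adv k s a)
        = (∑ a, π s a * ∑ j, q j * (ρ j s / ρ k s) * Adv j s a)
          - ∑ a, π s a * Adv k s a := by
      rw [← Finset.sum_sub_distrib]
      exact Finset.sum_congr rfl fun a _ => by ring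
    have e2 : ∑ a, π s a * ∑ j, q j * (ρ j s / ρ k s) * Adv j s a
        = ∑ j, q j * (ρ j s / ρ k s) * ∑ a, π s a * Adv j s a := by
      calc ∑ a, π s a * ∑ j, q j * (ρ j s / ρ k s) * Adv j s a
          = ∑ a, ∑ j, q j * (ρ j s / ρ k s) * (π s a * Adv j s a) := by
            refine Finset.sum_congr rfl fun a _ => ?_
            rw [Finset.mul_sum]
            exact Finset.sum_congr rfl fun j _ => by ring
        _ = ∑ j, ∑ a, q j * (ρ j s / ρ k s) * (π s a * Adv j s a) := Finset.sum_comm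
        _ = ∑ j, q j * (ρ j s / ρ k s) * ∑ a, π s a * Adv j s a := by
            refine Finset.sum_congr rfl fun j _ => ?_
            rw [Finset.mul_sum]
    rw [e1, e2, hAdv k s]
    simp [hAdv]
  -- the remainder term bound
  have hR : ∀ k : Fin N,
      -(2 * frobNorm (hetMat N q ρ Adv k) * ∑ s, ρ k s * dTV (π s) (πs k s))
      ≤ ∑ s, ρ k s * ∑ a, πs k s a * hetMat N q ρ Adv k s a := by
    intro k
    have hterm : ∀ s : S,
        ρ k s * -(2 * frobNorm (hetMat N q ρ Adv k) * dTV (π s) (πs k s))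
        ≤ ρ k s * ∑ a, πs k s a * hetMat N q ρ Adv k s a := fun s =>
      mul_le_mul_of_nonneg_left
        (weighted_sum_lb' (π s) (πs k s) (fun a => hetMat N q ρ Adv k s a)
          (frobNorm (hetMat N q ρ Adv k))
          (fun a => abs_le_frobNorm' (hetMat N q ρ Adv k) s a) (h0 k s))
        (hρ k s).le
    calc -(2 * frobNorm (hetMat N q ρ Adv k) * ∑ s, ρ k s * dTV (π s) (πs k s))
        = ∑ s, ρ k s * -(2 * frobNorm (hetMat N q ρ Adv k) * dTV (π s) (πs k s)) := by
          rw [Finset.mul_sum]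
          rw [← Finset.sum_neg_distrib]
          exact Finset.sum_congr rfl fun s _ => by ring
      _ ≤ _ := Finset.sum_le_sum fun s _ => hterm s
  -- the TV term bound
  have hC : ∑ n, q n * (cCoef γ (Adv n) * ∑ s, ρ n s * dTV (π s) (πb s))
      ≤ ∑ k, q k * ((∑ n, q n * cCoef γ (Adv n))
            * (∑ s, ρ k s * dTV (π s) (πs k s))
          + (∑ n, q n * cCoef γ (Adv n) * (∑ s, |ρ n s - ρ k s|))
            * dTVmax π (πs k)) := by
    have hc : ∀ n, 0 ≤ cCoef γ (Adv n) := fun n => cCoef_nonneg' hγ0 hγ1 (Adv n)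
    -- step a: convexity of TV
    have hconv : ∀ s, dTV (π s) (πb s) ≤ ∑ k, q k * dTV (π s) (πs k s) := by
      intro s
      exact dTV_convex' q hq hqsum (π s) (fun k => πs k s)
    -- step b
    have hb : ∀ n : Fin N, q n * (cCoef γ (Adv n) * ∑ s, ρ n s * dTV (π s) (πb s))
        ≤ ∑ k, q n * cCoef γ (Adv n) * (q k * ∑ s, ρ n s * dTV (π s) (πs k s)) := by
      intro n
      have e3 : ∑ k, q n * cCoef γ (Adv n) * (q k * ∑ s, ρ n s * dTV (π s) (πs k s))
          = q n * (cCoef γ (Adv n) * ∑ s, ρ n s * ∑ k, q k * dTV (π s) (πs k s)) := by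
        have e4 : ∑ s, ρ n s * ∑ k, q k * dTV (π s) (πs k s)
            = ∑ k, q k * ∑ s, ρ n s * dTV (π s) (πs k s) := by
          calc ∑ s, ρ n s * ∑ k, q k * dTV (π s) (πs k s)
              = ∑ s, ∑ k, q k * (ρ n s * dTV (π s) (πs k s)) := by
                refine Finset.sum_congr rfl fun s _ => ?_
                rw [Finset.mul_sum]
                exact Finset.sum_congr rfl fun k _ => by ring
            _ = ∑ k, ∑ s, q k * (ρ n s * dTV (π s) (πs k s)) := Finset.sum_comm
            _ = ∑ k, q k * ∑ s, ρ n s * dTV (π s) (πs k s) := by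
                refine Finset.sum_congr rfl fun k _ => ?_
                rw [Finset.mul_sum]
        rw [e4, Finset.mul_sum, Finset.mul_sum]
        exact Finset.sum_congr rfl fun k _ => by ring
      rw [e3]
      have hle : ∑ s, ρ n s * dTV (π s) (πb s)
          ≤ ∑ s, ρ n s * ∑ k, q k * dTV (π s) (πs k s) :=
        Finset.sum_le_sum fun s _ =>
          mul_le_mul_of_nonneg_left (hconv s) (hρ n s).le
      have : 0 ≤ q n * cCoef γ (Adv n) := mul_nonneg (hq n) (hc n)
      nlinarith [this, hle]
    -- step c: compare per n,k
    have hnk : ∀ (n k : Fin N), ∑ s, ρ n s * dTV (π s) (πs k s)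
        ≤ (∑ s, ρ k s * dTV (π s) (πs k s))
          + (∑ s, |ρ n s - ρ k s|) * dTVmax π (πs k) := by
      intro n k
      have e5 : (∑ s, ρ k s * dTV (π s) (πs k s))
          + (∑ s, |ρ n s - ρ k s|) * dTVmax π (πs k)
          = ∑ s, (ρ k s * dTV (π s) (πs k s) + |ρ n s - ρ k s| * dTVmax π (πs k)) := by
        rw [Finset.sum_add_distrib, Finset.sum_mul]
      rw [e5]
      refine Finset.sum_le_sum fun s _ => ?_
      have hd0 : 0 ≤ dTV (π s) (πs k s) := dTV_nonneg' _ _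
      have hdm : dTV (π s) (πs k s) ≤ dTVmax π (πs k) := dTV_le_dTVmax' _ _ s
      have habs : ρ n s - ρ k s ≤ |ρ n s - ρ k s| := le_abs_self _
      have habs0 : 0 ≤ |ρ n s - ρ k s| := abs_nonneg _
      nlinarith
    calc ∑ n, q n * (cCoef γ (Adv n) * ∑ s, ρ n s * dTV (π s) (πb s))
        ≤ ∑ n, ∑ k, q n * cCoef γ (Adv n)
            * (q k * ∑ s, ρ n s * dTV (π s) (πs k s)) :=
          Finset.sum_le_sum fun n _ => hb n
      _ ≤ ∑ n, ∑ k, q n * cCoef γ (Adv n)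
            * (q k * ((∑ s, ρ k s * dTV (π s) (πs k s))
                + (∑ s, |ρ n s - ρ k s|) * dTVmax π (πs k))) := by
          refine Finset.sum_le_sum fun n _ => Finset.sum_le_sum fun k _ => ?_
          refine mul_le_mul_of_nonneg_left ?_ (mul_nonneg (hq n) (cCoef_nonneg' hγ0 hγ1 (Adv n)))
          exact mul_le_mul_of_nonneg_left (hnk n k) (hq k)
      _ = ∑ k, ∑ n, q n * cCoef γ (Adv n)
            * (q k * ((∑ s, ρ k s * dTV (π s) (πs k s))
                + (∑ s, |ρ n s - ρ k s|) * dTVmax π (πs k))) := Finset.sum_comm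
      _ = ∑ k, q k * ((∑ n, q n * cCoef γ (Adv n))
            * (∑ s, ρ k s * dTV (π s) (πs k s))
          + (∑ n, q n * cCoef γ (Adv n) * (∑ s, |ρ n s - ρ k s|))
            * dTVmax π (πs k)) := by
          refine Finset.sum_congr rfl fun k _ => ?_
          rw [mul_add, Finset.sum_mul, Finset.sum_mul, Finset.mul_sum, Finset.mul_sum,
            ← Finset.sum_add_distrib]
          exact Finset.sum_congr rfl fun n _ => by ring
  -- per-agent inequality from hpos
  have hfin : ∑ k, q k * ((∑ n, q n * cCoef γ (Adv n))
            * (∑ s, ρ k s * dTV (π s) (πs k s))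
          + (∑ n, q n * cCoef γ (Adv n) * (∑ s, |ρ n s - ρ k s|))
            * dTVmax π (πs k))
      ≤ ∑ k, q k * (policyAdv (ρ k) (Adv k) (πs k)
          + ∑ s, ρ k s * ∑ a, πs k s a * hetMat N q ρ Adv k s a) := by
    refine Finset.sum_le_sum fun k _ => ?_
    refine mul_le_mul_of_nonneg_left ?_ (hq k)
    have h5 := hpos k
    unfold hObj at h5
    have hδ : (2 * ∑ n, q n * cCoef γ (Adv n) * ((1 / 2) * ∑ s, |ρ n s - ρ k s|))
        = ∑ n, q n * cCoef γ (Adv n) * (∑ s, |ρ n s - ρ k s|) := by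
      rw [Finset.mul_sum]
      exact Finset.sum_congr rfl fun n _ => by ring
    rw [hδ] at h5
    have h6 := hR k
    linarith
  -- wrap up
  have hcore : 0 ≤ ∑ n, (q n * policyAdv (ρ n) (Adv n) πb
      - q n * (cCoef γ (Adv n) * ∑ s, ρ n s * dTV (π s) (πb s))) := by
    have hsub : ∑ n, (q n * policyAdv (ρ n) (Adv n) πb
        - q n * (cCoef γ (Adv n) * ∑ s, ρ n s * dTV (π s) (πb s)))
        = ∑ n, q n * policyAdv (ρ n) (Adv n) πb
          - ∑ n, q n * (cCoef γ (Adv n) * ∑ s, ρ n s * dTV (π s) (πb s)) :=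
      Finset.sum_sub_distrib _ _
    rw [hsub, hA]
    linarith [hC, hfin]
  linarith [h1, hsplit, hcore]
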